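/- Let F = ⋃ₙ Fₙ ⊆ 2^ω where (Fₙ) is an increasing sequence of closed sets, and suppose F is meager and dense in 2^ω. Define, for s ∈ 2^{<ω} with N_s ∩ F ≠ ∅, n_s := min{n : Fₙ ∩ N_s ≠ ∅}, and let D := {s : s = ∅ or n_s ≠ n_{s'} where s' is s with its last entry removed}. Set 𝔹_F := {(α,α) : α ∈ 2^ω ∖ F} (viewed inside (3^ω ∖ F) × 2^ω) and 𝔸_F := {(α,β) : ∃ s ∈ D, s⌢2 ⊑ α, s ⊑ β, β ∈ F_{n_s}}. Then 𝔹_F cannot be covered by a countable union ⋃ᵢ (Uᵢ × Vᵢ) with each Uᵢ open in 3^ω ∖ F and each Vᵢ closed in 2^ω, while keeping this union disjoint from 𝔸_F: for any such cover of 𝔹_F, some Uᵢ × Vᵢ meets 𝔸_F. -/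

import Mathlib

open Set

/-- The canonical inclusion of Cantor space `2^ω = ℕ → Bool` into `3^ω = ℕ → Fin 3`. -/
def boolToTri : Bool → Fin 3 := fun b => if b then 1 else 0

/-- The embedding `2^ω ↪ 3^ω`. -/
def embC : (ℕ → Bool) → (ℕ → Fin 3) := fun α i => boolToTri (α i)

/-- The basic clopen set `N_s` of extensions of the finite sequence `s` in Cantor space. -/
def NsC (s : List Bool) : Set (ℕ → Bool) := {α | ∀ i : Fin s.length, α i = s.get i}

/- ### Auxiliary lemmas -/

/-- The initial segment of length `m` of `α`. -/
def resC (α : ℕ → Bool) (m : ℕ) : List Bool := List.ofFn fun i : Fin m => α i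

lemma resC_length (α : ℕ → Bool) (m : ℕ) : (resC α m).length = m :=
  List.length_ofFn

lemma resC_get (α : ℕ → Bool) (m : ℕ) (i : Fin (resC α m).length) :
    (resC α m).get i = α i := by
  obtain ⟨k, hk⟩ := i
  simp [resC, List.get_eq_getElem, List.getElem_ofFn]

lemma mem_NsC_resC (α : ℕ → Bool) (m : ℕ) : α ∈ NsC (resC α m) := by
  intro i; rw [resC_get]

lemma NsC_isOpen (s : List Bool) : IsOpen (NsC s) := by
  have : NsC s = ⋂ i : Fin s.length, {α : ℕ → Bool | α i = s.get i} := by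
    ext α; simp [NsC, Set.mem_iInter]
  rw [this]
  refine isOpen_iInter_of_finite fun i => ?_
  have h2 : {α : ℕ → Bool | α i = s.get i} = (fun α : ℕ → Bool => α (i : ℕ)) ⁻¹' {s.get i} := rfl
  rw [h2]
  exact (isOpen_discrete _).preimage (continuous_apply (i : ℕ))

lemma NsC_nonempty (s : List Bool) : (NsC s).Nonempty := by
  refine ⟨fun j => if h : j < s.length then s.get ⟨j, h⟩ else false, fun i => ?_⟩
  simp [i.isLt]

lemma prefix_resC {t : List Bool} {α : ℕ → Bool} (hα : α ∈ NsC t) {m : ℕ}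
    (hm : t.length ≤ m) : t <+: resC α m := by
  rw [List.prefix_iff_eq_take]
  refine List.ext_get ?_ ?_
  · rw [List.length_take, resC_length]; omega
  · intro n h1 h2
    have hn : n < m := lt_of_lt_of_le h1 hm
    have := hα ⟨n, h1⟩
    rw [show (List.take t.length (resC α m)).get ⟨n, h2⟩ = (resC α m).get ⟨n, by rwa [resC_length]⟩ by simp]
    rw [resC_get α m ⟨n, by rwa [resC_length]⟩] at *
    exact this.symm

lemma NsC_anti {t s : List Bool} (h : t <+: s) : NsC s ⊆ NsC t := by
  intro α hα i
  have hi : (i : ℕ) < s.length := lt_of_lt_of_le i.isLt h.length_le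
  have := hα ⟨i, hi⟩
  simp only [List.get_eq_getElem] at this ⊢
  rw [this, h.getElem i.isLt]

lemma mem_NsC_iff_lt {s : List Bool} {α : ℕ → Bool} :
    α ∈ NsC s ↔ ∀ j (h : j < s.length), α j = s.get ⟨j, h⟩ :=
  ⟨fun h j hj => h ⟨j, hj⟩, fun h i => h i i.isLt⟩

/-- Cylinder basis for product spaces over `ℕ`. -/
lemma exists_cyl_subset {X : Type*} [TopologicalSpace X] {O : Set (ℕ → X)}
    (hO : IsOpen O) {x : ℕ → X} (hx : x ∈ O) :
    ∃ m, ∀ y : ℕ → X, (∀ j < m, y j = x j) → y ∈ O := by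
  obtain ⟨I, u, hu, hsub⟩ := isOpen_pi_iff.mp hO x hx
  refine ⟨(I.sup id) + 1, fun y hy => hsub ?_⟩
  intro a ha
  have : y a = x a := hy a (Nat.lt_succ_of_le (Finset.le_sup (f := id) ha))
  rw [this]
  exact (hu a ha).2

lemma meagre_of_nwd {X : Type*} [TopologicalSpace X] {s : Set X}
    (h : interior (closure s) = ∅) : IsMeagre s := by
  have hcl : IsMeagre (closure s) :=
    residual_of_dense_open (isOpen_compl_iff.mpr isClosed_closure)
      (interior_eq_empty_iff_dense_compl.mp h)
  exact hcl.mono subset_closure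

lemma not_meagre_of_open {X : Type*} [TopologicalSpace X] [BaireSpace X]
    {O : Set X} (hO : IsOpen O) (hne : O.Nonempty) : ¬ IsMeagre O := by
  intro h
  have hd : Dense Oᶜ := dense_of_mem_residual h
  obtain ⟨y, hyc, hyO⟩ := hd.exists_mem_open hO hne
  exact hyc hyO

lemma boolToTri_ne_two (b : Bool) : boolToTri b ≠ 2 := by
  cases b <;> simp [boolToTri]

lemma embC_injective : Function.Injective embC := by
  intro a b h
  funext i
  have := congrFun h i
  simp only [embC, boolToTri] at this
  cases ha : a i <;> cases hb : b i <;> simp [ha, hb] at this ⊢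

theorem stmt13 (Fseq : ℕ → Set (ℕ → Bool))
    (hclosed : ∀ n, IsClosed (Fseq n)) (hmono : Monotone Fseq)
    (F : Set (ℕ → Bool)) (hF : F = ⋃ n, Fseq n)
    (hmeager : IsMeagre F) (hdense : Dense F)
    (ns : List Bool → ℕ) (hns : ∀ s, ns s = sInf {n | (Fseq n ∩ NsC s).Nonempty})
    (D : Set (List Bool)) (hD : D = {s | s = [] ∨ ns s ≠ ns s.dropLast})
    (𝔹F 𝔸F : Set ({β : ℕ → Fin 3 // β ∉ embC '' F} × (ℕ → Bool)))
    (h𝔹F : 𝔹F = {p | p.1.1 = embC p.2 ∧ p.2 ∉ F})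
    (h𝔸F : 𝔸F = {p | ∃ s ∈ D,
        (∀ i : Fin s.length, p.1.1 i = boolToTri (s.get i)) ∧ p.1.1 s.length = 2 ∧
        (∀ i : Fin s.length, p.2 i = s.get i) ∧ p.2 ∈ Fseq (ns s)})
    (U : ℕ → Set {β : ℕ → Fin 3 // β ∉ embC '' F}) (V : ℕ → Set (ℕ → Bool))
    (hU : ∀ i, IsOpen (U i)) (hV : ∀ i, IsClosed (V i))
    (hcover : 𝔹F ⊆ ⋃ i, (U i) ×ˢ (V i)) :
    ∃ i, (((U i) ×ˢ (V i)) ∩ 𝔸F).Nonempty := by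
  classical
  -- Step 0 : basic facts about ns
  have hFmem : ∀ s : List Bool, (Fseq (ns s) ∩ NsC s).Nonempty := by
    intro s
    have hne : {n | (Fseq n ∩ NsC s).Nonempty}.Nonempty := by
      obtain ⟨β, hβF, hβs⟩ := hdense.exists_mem_open (NsC_isOpen s) (NsC_nonempty s)
      rw [hF] at hβF
      obtain ⟨n, hn⟩ := Set.mem_iUnion.mp hβF
      exact ⟨n, ⟨β, hn, hβs⟩⟩
    have := Nat.sInf_mem hne
    rwa [← hns s] at this
  -- Step 1 : every finite sequence has an extension in D
  have hDext : ∀ t : List Bool, ∃ s, t <+: s ∧ s ∈ D := by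
    intro t
    by_contra hno
    push_neg at hno
    -- then ns is constant on extensions of t
    have hconst : ∀ s, t <+: s → ns s = ns t := by
      intro s
      induction s using List.reverseRecOn with
      | nil => intro h; rw [List.prefix_iff_eq_take] at h; simp at h; rw [h]
      | append_singleton l b ih =>
        intro h
        rcases List.prefix_concat_iff.mp h with h1 | h1
        · rw [h1]
        · have h2 := hno (l ++ [b]) (h1.trans (List.prefix_append l [b]))
          rw [hD] at h2
          simp only [Set.mem_setOf_eq, not_or, not_not] at h2
          rw [h2.2, List.dropLast_concat, ih h1]
    -- hence Fseq (ns t) is dense in NsC t, so NsC t ⊆ Fseq (ns t) ⊆ F, meagre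
    have hsub : NsC t ⊆ Fseq (ns t) := by
      intro α hα
      rw [← (hclosed (ns t)).closure_eq]
      rw [mem_closure_iff]
      intro O hO hαO
      obtain ⟨m, hm⟩ := exists_cyl_subset hO hαO
      set s := resC α (max m t.length) with hs
      have hts : t <+: s := prefix_resC hα (le_max_right _ _)
      obtain ⟨β, hβ1, hβ2⟩ := hFmem s
      refine ⟨β, hm β ?_, by rwa [hconst s hts] at hβ1⟩
      intro j hj
      have hj' : j < s.length := by rw [hs, resC_length]; omega
      rw [mem_NsC_iff_lt.mp hβ2 j hj', resC_get]
    have : IsMeagre (NsC t) := (hmeager.mono (by rw [hF]; exact hsub.trans (Set.subset_iUnion _ _)))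
    exact not_meagre_of_open (NsC_isOpen t) (NsC_nonempty t) this
  -- Step 2 : extract open sets in 3^ω
  have hU' : ∀ i, ∃ W : Set (ℕ → Fin 3), IsOpen W ∧ Subtype.val ⁻¹' W = U i := by
    intro i
    exact isOpen_induced_iff.mp (hU i)
  choose UU hUUopen hUUeq using hU'
  -- Step 3 : the sets C i cover the complement of F
  set C : ℕ → Set (ℕ → Bool) := fun i => (embC ⁻¹' UU i) ∩ V i with hC
  have hWopen : ∀ i, IsOpen (embC ⁻¹' UU i) := by
    intro i
    refine (hUUopen i).preimage ?_
    exact continuous_pi fun j =>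
      (continuous_of_discreteTopology (f := boolToTri)).comp (continuous_apply j)
  have hCcover : ∀ α, α ∉ F → ∃ i, α ∈ C i := by
    intro α hα
    have hα' : embC α ∉ embC '' F := by
      rintro ⟨β, hβ, hβα⟩
      exact hα (embC_injective hβα ▸ hβ)
    have hmem : (⟨⟨embC α, hα'⟩, α⟩ : {β : ℕ → Fin 3 // β ∉ embC '' F} × (ℕ → Bool)) ∈ 𝔹F := by
      rw [h𝔹F]; exact ⟨rfl, hα⟩
    obtain ⟨i, hi⟩ := Set.mem_iUnion.mp (hcover hmem)
    refine ⟨i, ?_, hi.2⟩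
    have : (⟨embC α, hα'⟩ : {β : ℕ → Fin 3 // β ∉ embC '' F}) ∈ U i := hi.1
    rw [← hUUeq i] at this
    exact this
  -- Step 4 : some C i is non-meagre
  have hEx : ∃ i, ¬ IsMeagre (C i) := by
    by_contra hall
    push_neg at hall
    have h1 : IsMeagre (⋃ i, C i) := isMeagre_iUnion hall
    have h2 : IsMeagre (Set.univ : Set (ℕ → Bool)) := by
      have hsub : (Set.univ : Set (ℕ → Bool)) ⊆ F ∪ ⋃ i, C i := by
        intro α _
        by_cases hα : α ∈ F
        · exact Or.inl hα
        · exact Or.inr (Set.mem_iUnion.mpr (hCcover α hα))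
      have : IsMeagre (F ∪ ⋃ i, C i) := by
        unfold IsMeagre at *
        rw [Set.compl_union]
        exact Filter.inter_mem hmeager h1
      exact this.mono hsub
    exact not_meagre_of_open isOpen_univ ⟨fun _ => false, trivial⟩ h2
  obtain ⟨i, hi⟩ := hEx
  -- Step 5 : find a basic clopen set inside (embC ⁻¹' UU i) ∩ V i
  have hO : (interior (closure (C i))).Nonempty := by
    rw [Set.nonempty_iff_ne_empty]
    intro h
    exact hi (meagre_of_nwd h)
  obtain ⟨x1, hx1⟩ := hO
  have hx1c : x1 ∈ closure (C i) := interior_subset hx1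
  obtain ⟨x0, hx0O, hx0C⟩ :=
    mem_closure_iff.mp hx1c _ isOpen_interior hx1
  -- x0 ∈ C i, and interior (closure (C i)) ∩ (embC ⁻¹' UU i) is an open nbhd of x0
  -- contained in both V i and embC ⁻¹' UU i
  set O' : Set (ℕ → Bool) := interior (closure (C i)) ∩ (embC ⁻¹' UU i) with hO'
  have hO'open : IsOpen O' := isOpen_interior.inter (hWopen i)
  have hx0O' : x0 ∈ O' := ⟨hx0O, hx0C.1⟩
  have hO'V : O' ⊆ V i := by
    intro y hy
    have : y ∈ closure (C i) := interior_subset hy.1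
    have hcV : closure (C i) ⊆ V i := by
      rw [← (hV i).closure_eq]
      exact closure_mono Set.inter_subset_right
    exact hcV this
  obtain ⟨m₀, hm₀⟩ := exists_cyl_subset hO'open hx0O'
  -- Step 6 : the open set UU i around embC x0 in 3^ω
  have hx0UU : embC x0 ∈ UU i := hx0C.1
  obtain ⟨m₁, hm₁⟩ := exists_cyl_subset (hUUopen i) hx0UU
  set m := max m₀ m₁ with hm
  set t : List Bool := resC x0 m with ht
  have htlen : t.length = m := resC_length _ _
  -- Step 7 : extend t to s ∈ D, get β
  obtain ⟨s, hts, hsD⟩ := hDext t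
  obtain ⟨β, hβF, hβs⟩ := hFmem s
  have hslen : m ≤ s.length := htlen ▸ hts.length_le
  -- the witness δ in 3^ω
  set δ : ℕ → Fin 3 := fun j => if h : j < s.length then boolToTri (s.get ⟨j, h⟩) else 2
    with hδ
  have hδs : ∀ i : Fin s.length, δ i = boolToTri (s.get i) := by
    intro j; simp only [hδ, dif_pos j.isLt]
  have hδ2 : δ s.length = 2 := by simp [hδ]
  have hδnotin : δ ∉ embC '' F := by
    rintro ⟨γ, _, hγ⟩
    have := congrFun hγ s.length
    rw [hδ2] at this
    exact boolToTri_ne_two (γ s.length) this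
  -- δ ∈ UU i
  have hδUU : δ ∈ UU i := by
    apply hm₁
    intro j hj
    have hjm : j < m := lt_of_lt_of_le hj (le_max_right _ _)
    have hjt : j < t.length := htlen ▸ hjm
    have hjs : j < s.length := lt_of_lt_of_le hjt hts.length_le
    have h1 : s.get ⟨j, hjs⟩ = t.get ⟨j, hjt⟩ := by
      simp only [List.get_eq_getElem]
      exact (hts.getElem hjt).symm
    calc δ j = boolToTri (s.get ⟨j, hjs⟩) := by simp only [hδ, dif_pos hjs]
      _ = boolToTri (t.get ⟨j, hjt⟩) := by rw [h1]
      _ = boolToTri (x0 j) := by rw [show t.get ⟨j, hjt⟩ = x0 j from resC_get x0 m ⟨j, hjt⟩]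
      _ = embC x0 j := rfl
  -- β ∈ V i
  have hβV : β ∈ V i := by
    apply hO'V
    apply hm₀
    intro j hj
    have hjm : j < m := lt_of_lt_of_le hj (le_max_left _ _)
    have hjt : j < t.length := htlen ▸ hjm
    have hjs : j < s.length := lt_of_lt_of_le hjt hts.length_le
    have h1 : s.get ⟨j, hjs⟩ = t.get ⟨j, hjt⟩ := by
      simp only [List.get_eq_getElem]
      exact (hts.getElem hjt).symm
    calc β j = s.get ⟨j, hjs⟩ := mem_NsC_iff_lt.mp hβs j hjs
      _ = t.get ⟨j, hjt⟩ := h1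
      _ = x0 j := resC_get x0 m ⟨j, hjt⟩
  -- assemble the point
  refine ⟨i, ⟨⟨δ, hδnotin⟩, β⟩, ⟨?_, hβV⟩, ?_⟩
  · rw [← hUUeq i]; exact hδUU
  · rw [h𝔸F]
    exact ⟨s, hsD, hδs, hδ2, fun j => mem_NsC_iff_lt.mp hβs j j.isLt, hβF⟩
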